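/- If X is a Benford random variable, then for each d ∈ {1,...,9}, E[S(X)·𝟙{d ≤ S(X) < d+1}] = C, where C = log₁₀ e (the sum-invariance property). -/

import Mathlib

open MeasureTheory
open scoped NNReal ENNReal

/-- Sum-invariance property of Benford's law: for each first digit `d ∈ {1,…,9}`,
`E[S(X)·𝟙{d ≤ S(X) < d+1}] = C`, where `C = log₁₀ e`. -/
theorem benford_sum_invariance {Ω : Type*} [MeasurableSpace Ω] (μ : Measure Ω)
    [IsProbabilityMeasure μ] (S : Ω → ℝ) (hS : Measurable S)
    (hlaw : Measure.map S μ
      = (volume.restrict (Set.Ico (1 : ℝ) 10)).withDensity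
          (fun u => ENNReal.ofReal (Real.logb 10 (Real.exp 1) / u))) :
    ∀ d ∈ Finset.Icc (1 : ℕ) 9,
      ∫ ω, Set.indicator (Set.Ico (d : ℝ) ((d : ℝ) + 1)) id (S ω) ∂μ
        = Real.logb 10 (Real.exp 1) := by
  intro d hd
  rw [Finset.mem_Icc] at hd
  set C : ℝ := Real.logb 10 (Real.exp 1) with hC
  have hCpos : 0 < C := by
    apply Real.logb_pos (by norm_num)
    have := Real.exp_one_gt_d9
    linarith
  have hmeas : Measurable (Set.indicator (Set.Ico (d : ℝ) ((d : ℝ) + 1)) (id : ℝ → ℝ)) :=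
    measurable_id.indicator measurableSet_Ico
  rw [← integral_map hS.aemeasurable hmeas.aestronglyMeasurable, hlaw]
  have hdens : (fun u : ℝ => ENNReal.ofReal (C / u))
      = fun u : ℝ => ((C / u).toNNReal : ℝ≥0∞) := rfl
  have hm : Measurable fun u : ℝ => (C / u).toNNReal := by
    exact (measurable_const.div measurable_id).real_toNNReal
  rw [hdens, integral_withDensity_eq_integral_smul hm]
  have hsub : Set.Ico (d : ℝ) ((d : ℝ) + 1) ⊆ Set.Ico (1 : ℝ) 10 := by
    intro x hx
    have h1 : (1 : ℝ) ≤ (d : ℝ) := by exact_mod_cast hd.1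
    have h2 : (d : ℝ) + 1 ≤ 10 := by
      have : (d : ℝ) ≤ 9 := by exact_mod_cast hd.2
      linarith
    exact ⟨le_trans h1 hx.1, lt_of_lt_of_le hx.2 h2⟩
  have hcongr : ∀ x ∈ Set.Ico (1 : ℝ) 10,
      (C / x).toNNReal • Set.indicator (Set.Ico (d : ℝ) ((d : ℝ) + 1)) id x
        = Set.indicator (Set.Ico (d : ℝ) ((d : ℝ) + 1)) (fun _ => C) x := by
    intro x hx
    by_cases hxm : x ∈ Set.Ico (d : ℝ) ((d : ℝ) + 1)
    · rw [Set.indicator_of_mem hxm, Set.indicator_of_mem hxm]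
      have hx0 : 0 < x := lt_of_lt_of_le one_pos hx.1
      rw [NNReal.smul_def, Real.coe_toNNReal _ (le_of_lt (div_pos hCpos hx0))]
      simp [div_mul_cancel₀ C (ne_of_gt hx0)]
    · rw [Set.indicator_of_notMem hxm, Set.indicator_of_notMem hxm, smul_zero]
  rw [setIntegral_congr_fun measurableSet_Ico hcongr,
      integral_indicator measurableSet_Ico, Measure.restrict_restrict measurableSet_Ico,
      Set.inter_eq_left.mpr hsub, setIntegral_const]
  have : volume (Set.Ico (d : ℝ) ((d : ℝ) + 1)) = 1 := by
    rw [Real.volume_Ico]; simp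
  rw [measureReal_def, this]
  simp
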